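/- Let ψ : ℝⁿ → S^p be the linear map ψ(d) = Bᵀ (Σ_ℓ d_ℓ A_ℓ) B where A_1,…,A_n ∈ S^m and B ∈ ℝ^{m×p} has orthonormal columns. If for every orthogonal C ∈ ℝ^{p×p} the vectors v_i ∈ ℝⁿ defined by (v_i)_ℓ = (Bc_i)ᵀ A_ℓ (Bc_i), i = 1,…,p, are linearly independent (c_i the columns of C), then the adjoint ψ* is injective; i.e., if Y ∈ S^p satisfies ⟨Bᵀ A_ℓ B, Y⟩ = 0 for all ℓ, then Y = 0. -/

import Mathlib

open Matrix

lemma trace_mul_spectral (p : ℕ) (M C : Matrix (Fin p) (Fin p) ℝ) (y : Fin p → ℝ) :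
    (M * (C * diagonal y * Cᵀ)).trace = ∑ i, y i * ((Cᵀ * M * C) i i) := by
  rw [show M * (C * diagonal y * Cᵀ) = M * C * diagonal y * Cᵀ by
    simp only [Matrix.mul_assoc], trace_mul_comm, ← Matrix.mul_assoc, ← Matrix.mul_assoc]
  simp [trace, Matrix.diag, Matrix.mul_diagonal, mul_comm, Matrix.mul_assoc]

/-- If for every orthogonal `C` the diagonal vectors `v_i`,
`(v_i)_ℓ = (Bc_i)ᵀ A_ℓ (Bc_i)`, are linearly independent, then the adjoint of
`ψ(d) = Bᵀ(Σ_ℓ d_ℓ A_ℓ)B` is injective: any symmetric `Y` with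
`⟨Bᵀ A_ℓ B, Y⟩ = 0` for all `ℓ` is zero. -/
theorem adjoint_injective_of_diag_li (n m p : ℕ)
    (A : Fin n → Matrix (Fin m) (Fin m) ℝ) (hA : ∀ ℓ, (A ℓ).IsSymm)
    (B : Matrix (Fin m) (Fin p) ℝ) (hB : Bᵀ * B = 1)
    (h : ∀ C : Matrix (Fin p) (Fin p) ℝ, Cᵀ * C = 1 →
        LinearIndependent ℝ (fun i : Fin p => fun ℓ : Fin n =>
          (fun k => (B * C) k i) ⬝ᵥ (A ℓ).mulVec (fun k => (B * C) k i))) :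
    ∀ Y : Matrix (Fin p) (Fin p) ℝ, Y.IsSymm →
      (∀ ℓ, (Bᵀ * A ℓ * B * Y).trace = 0) → Y = 0 := by
  intro Y hY hTr
  have hH : Y.IsHermitian := by
    rwa [Matrix.IsHermitian, conjTranspose_eq_transpose_of_trivial]
  set C : Matrix (Fin p) (Fin p) ℝ := (hH.eigenvectorUnitary : Matrix (Fin p) (Fin p) ℝ) with hCdef
  set y : Fin p → ℝ := hH.eigenvalues with hydef
  have hCstar : star C * C = 1 := Unitary.coe_star_mul_self hH.eigenvectorUnitary
  have hCo : Cᵀ * C = 1 := by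
    rwa [Matrix.star_eq_conjTranspose, conjTranspose_eq_transpose_of_trivial] at hCstar
  have hspec : Y = C * diagonal y * Cᵀ := by
    have := hH.spectral_theorem
    rwa [Unitary.conjStarAlgAut_apply, Matrix.star_eq_conjTranspose, conjTranspose_eq_transpose_of_trivial,
      show (RCLike.ofReal ∘ hH.eigenvalues : Fin p → ℝ) = y from rfl] at this
  have hv : ∀ (ℓ) (i : Fin p),
      (fun k => (B * C) k i) ⬝ᵥ (A ℓ).mulVec (fun k => (B * C) k i)
        = (Cᵀ * (Bᵀ * A ℓ * B) * C) i i := by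
    intro ℓ i
    have hre : Cᵀ * (Bᵀ * A ℓ * B) * C = (B * C)ᵀ * (A ℓ * (B * C)) := by
      simp only [Matrix.transpose_mul, Matrix.mul_assoc]
    rw [hre]
    simp only [Matrix.mul_apply, Matrix.transpose_apply, dotProduct, Matrix.mulVec, dotProduct]
  have hsum : ∀ ℓ, ∑ i, y i * ((fun k => (B * C) k i) ⬝ᵥ (A ℓ).mulVec (fun k => (B * C) k i))
      = 0 := by
    intro ℓ
    have ht := hTr ℓ
    rw [hspec, trace_mul_spectral] at ht
    simp_rw [hv]
    exact ht
  have hy0 : ∀ i, y i = 0 := by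
    have hli := h C hCo
    rw [Fintype.linearIndependent_iff] at hli
    intro i
    apply hli y _ i
    funext ℓ
    simpa [Finset.sum_apply, mul_comm] using hsum ℓ
  rw [hspec, show diagonal y = 0 from by
    ext i j; by_cases hij : i = j <;> simp [hij, hy0]]
  simp
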